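/- Let n be a positive integer and let T = ℝⁿ/ℤⁿ be the torus, with quotient map π : ℝⁿ → T. A subset S ⊆ T is polyhedral if and only if the intersection of its preimage π⁻¹(S) with the unit cube [0,1]ⁿ is a finite union of polytopes in ℝⁿ. -/

import Mathlib

open Set Pointwise

/-- The integer lattice ℤⁿ as an additive subgroup of ℝⁿ. -/
def intLattice (n : ℕ) : AddSubgroup (Fin n → ℝ) where
  carrier := {x | ∀ i, ∃ m : ℤ, x i = (m : ℝ)}
  zero_mem' := fun i => ⟨0, by simp⟩
  add_mem' := by
    intro x y hx hy i
    obtain ⟨a, ha⟩ := hx i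
    obtain ⟨b, hb⟩ := hy i
    exact ⟨a + b, by simp [Pi.add_apply, ha, hb]⟩
  neg_mem' := by
    intro x hx i
    obtain ⟨a, ha⟩ := hx i
    exact ⟨-a, by simp [Pi.neg_apply, ha]⟩

/-- The torus T = ℝⁿ/ℤⁿ, with the quotient topology. -/
abbrev Torus (n : ℕ) := (Fin n → ℝ) ⧸ intLattice n

/-- The quotient map π : ℝⁿ → T. -/
def torusPi (n : ℕ) : (Fin n → ℝ) → Torus n := QuotientAddGroup.mk' (intLattice n)

/-- A polytope in ℝⁿ is the convex hull of a finite set of points. -/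
def IsPolytope {n : ℕ} (P : Set (Fin n → ℝ)) : Prop :=
  ∃ s : Finset (Fin n → ℝ), P = convexHull ℝ (s : Set (Fin n → ℝ))

/-- A finite union of polytopes in ℝⁿ. -/
def IsFinUnionOfPolytopes {n : ℕ} (A : Set (Fin n → ℝ)) : Prop :=
  ∃ (k : ℕ) (P : Fin k → Set (Fin n → ℝ)), (∀ i, IsPolytope (P i)) ∧ A = ⋃ i, P i

/-- A subset of the torus is polyhedral if it is the image under π of a
finite union of polytopes in ℝⁿ. -/
def IsPolyhedral {n : ℕ} (S : Set (Torus n)) : Prop :=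
  ∃ A : Set (Fin n → ℝ), IsFinUnionOfPolytopes A ∧ S = torusPi n '' A


variable {E : Type*} [AddCommGroup E] [Module ℝ E]

noncomputable def crossPt (f : E →ₗ[ℝ] ℝ) (c : ℝ) (p q : E) : E :=
  ((f q - c)/(f q - f p)) • p + ((c - f p)/(f q - f p)) • q

lemma crossPt_map (f : E →ₗ[ℝ] ℝ) (c : ℝ) {p q : E} (hp : f p < c) (hq : c < f q) :
    f (crossPt f c p q) = c := by
  have hd : f q - f p ≠ 0 := by linarith
  simp only [crossPt, map_add, map_smul, smul_eq_mul]
  field_simp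
  ring

lemma crossPt_mem_segment (f : E →ₗ[ℝ] ℝ) (c : ℝ) {p q : E} (hp : f p < c) (hq : c < f q) :
    crossPt f c p q ∈ segment ℝ p q := by
  have hd : (0:ℝ) < f q - f p := by linarith
  refine ⟨(f q - c)/(f q - f p), (c - f p)/(f q - f p), ?_, ?_, ?_, rfl⟩
  · apply div_nonneg <;> linarith
  · apply div_nonneg <;> linarith
  · field_simp; ring

theorem exists_slice (f : E →ₗ[ℝ] ℝ) (c : ℝ) (s : Finset E) :
    ∃ t : Finset E, convexHull ℝ (s : Set E) ∩ {x | f x ≤ c} = convexHull ℝ (t : Set E) := by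
  classical
  set t : Finset E := s.filter (fun p => f p ≤ c) ∪
    ((s ×ˢ s).filter (fun pq => f pq.1 < c ∧ c < f pq.2)).image
      (fun pq => crossPt f c pq.1 pq.2) with ht_def
  have ht_le : ∀ x ∈ t, f x ≤ c := by
    intro x hx
    rcases Finset.mem_union.1 hx with h | h
    · exact (Finset.mem_filter.1 h).2
    · obtain ⟨pq, hpq, rfl⟩ := Finset.mem_image.1 h
      obtain ⟨-, h1, h2⟩ := Finset.mem_filter.1 hpq
      exact le_of_eq (crossPt_map f c h1 h2)
  have ht_lt_mem : ∀ x ∈ t, f x < c → x ∈ s := by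
    intro x hx hlt
    rcases Finset.mem_union.1 hx with h | h
    · exact (Finset.mem_filter.1 h).1
    · obtain ⟨pq, hpq, rfl⟩ := Finset.mem_image.1 h
      obtain ⟨-, h1, h2⟩ := Finset.mem_filter.1 hpq
      exact absurd (crossPt_map f c h1 h2) (ne_of_lt hlt)
  have hcross_mem : ∀ p ∈ s, ∀ q ∈ s, f p < c → c < f q → crossPt f c p q ∈ t := by
    intro p hp q hq h1 h2
    exact Finset.mem_union.2 (Or.inr (Finset.mem_image.2 ⟨(p, q),
      Finset.mem_filter.2 ⟨Finset.mem_product.2 ⟨hp, hq⟩, h1, h2⟩, rfl⟩))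
  set u : Finset E := s ∪ t with hu_def
  have hsu : s ⊆ u := Finset.subset_union_left
  have htu : t ⊆ u := Finset.subset_union_right
  have key : ∀ N : ℕ, ∀ w : E → ℝ, (∀ i ∈ u, 0 ≤ w i) → (∑ i ∈ u, w i) = 1 →
      (∑ i ∈ u, w i * f i) ≤ c → (u.filter (fun i => w i ≠ 0 ∧ f i ≠ c)).card ≤ N →
      (∑ i ∈ u, w i • i) ∈ convexHull ℝ (t : Set E) := by
    intro N
    induction N with
    | zero =>
      intro w hw0 hw1 hwf hcard
      by_cases hq : ∃ q ∈ u, w q ≠ 0 ∧ c < f q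
      · obtain ⟨q, hqu, hq0, hqc⟩ := hq
        exfalso
        have : q ∈ u.filter (fun i => w i ≠ 0 ∧ f i ≠ c) :=
          Finset.mem_filter.2 ⟨hqu, hq0, ne_of_gt hqc⟩
        have := Finset.card_pos.2 ⟨q, this⟩
        omega
      · push_neg at hq
        have hcm : (∑ i ∈ u, w i • i) = u.centerMass w id := by
          rw [Finset.centerMass_eq_of_sum_1 _ _ hw1]; simp
        rw [hcm, ← Finset.centerMass_filter_ne_zero (z := id)]
        refine Finset.centerMass_mem_convexHull _ (fun i hi => hw0 i (Finset.mem_filter.1 hi).1)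
          ?_ ?_
        · rw [Finset.sum_filter_ne_zero, hw1]; norm_num
        · intro i hi
          obtain ⟨hiu, hi0⟩ := Finset.mem_filter.1 hi
          have hfi : f i ≤ c := hq i hiu hi0
          rcases Finset.mem_union.1 hiu with h | h
          · exact Finset.mem_coe.2 (Finset.mem_union.2 (Or.inl (Finset.mem_filter.2 ⟨h, hfi⟩)))
          · exact Finset.mem_coe.2 h
    | succ N ih =>
      intro w hw0 hw1 hwf hcard
      by_cases hq : ∃ q ∈ u, w q ≠ 0 ∧ c < f q
      swap
      · push_neg at hq
        have hcm : (∑ i ∈ u, w i • i) = u.centerMass w id := by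
          rw [Finset.centerMass_eq_of_sum_1 _ _ hw1]; simp
        rw [hcm, ← Finset.centerMass_filter_ne_zero (z := id)]
        refine Finset.centerMass_mem_convexHull _ (fun i hi => hw0 i (Finset.mem_filter.1 hi).1)
          ?_ ?_
        · rw [Finset.sum_filter_ne_zero, hw1]; norm_num
        · intro i hi
          obtain ⟨hiu, hi0⟩ := Finset.mem_filter.1 hi
          have hfi : f i ≤ c := hq i hiu hi0
          rcases Finset.mem_union.1 hiu with h | h
          · exact Finset.mem_coe.2 (Finset.mem_union.2 (Or.inl (Finset.mem_filter.2 ⟨h, hfi⟩)))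
          · exact Finset.mem_coe.2 h
      obtain ⟨q, hqu, hq0, hqc⟩ := hq
      have hp : ∃ p ∈ u, w p ≠ 0 ∧ f p < c := by
        by_contra h
        push_neg at h
        have hlt : (∑ i ∈ u, w i * c) < ∑ i ∈ u, w i * f i := by
          refine Finset.sum_lt_sum (fun i hi => ?_) ⟨q, hqu, ?_⟩
          · by_cases hwi : w i = 0
            · simp [hwi]
            · exact mul_le_mul_of_nonneg_left (h i hi hwi) (hw0 i hi)
          · have hwq : 0 < w q := lt_of_le_of_ne (hw0 q hqu) (Ne.symm hq0)
            exact mul_lt_mul_of_pos_left hqc hwq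
        rw [← Finset.sum_mul, hw1, one_mul] at hlt
        linarith
      obtain ⟨p, hpu, hp0, hpc⟩ := hp
      have hps : p ∈ s := by
        rcases Finset.mem_union.1 hpu with h | h
        · exact h
        · exact ht_lt_mem p h hpc
      have hqs : q ∈ s := by
        rcases Finset.mem_union.1 hqu with h | h
        · exact h
        · exact absurd (ht_le q h) (not_le.2 hqc)
      have hd : (0:ℝ) < f q - f p := by linarith
      set a : ℝ := (f q - c)/(f q - f p) with ha_def
      set b : ℝ := (c - f p)/(f q - f p) with hb_def
      have ha : 0 < a := by apply div_pos <;> linarith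
      have hb : 0 < b := by apply div_pos <;> linarith
      have hab : a + b = 1 := by rw [ha_def, hb_def]; field_simp; ring
      have habf : a * f p + b * f q = c := by
        rw [ha_def, hb_def]; field_simp; ring
      set z : E := crossPt f c p q with hz_def
      have hfz : f z = c := crossPt_map f c hpc hqc
      have hzt : z ∈ t := hcross_mem p hps q hqs hpc hqc
      have hzu : z ∈ u := htu hzt
      have hzdef : z = a • p + b • q := rfl
      have hpq : p ≠ q := fun h => by rw [h] at hpc; linarith
      have hpz : p ≠ z := fun h => by rw [← h] at hfz; linarith
      have hqz : q ≠ z := fun h => by rw [← h] at hfz; linarith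
      set γ : ℝ := min (w p / a) (w q / b) with hγ_def
      have hγ0 : 0 ≤ γ := le_min (div_nonneg (hw0 p hpu) ha.le) (div_nonneg (hw0 q hqu) hb.le)
      have hγa : γ * a ≤ w p := by
        have := min_le_left (w p / a) (w q / b)
        calc γ * a ≤ (w p / a) * a := by nlinarith
        _ = w p := div_mul_cancel₀ _ (ne_of_gt ha)
      have hγb : γ * b ≤ w q := by
        have := min_le_right (w p / a) (w q / b)
        calc γ * b ≤ (w q / b) * b := by nlinarith
        _ = w q := div_mul_cancel₀ _ (ne_of_gt hb)
      set w' : E → ℝ := fun i => w i - (if i = p then γ * a else 0)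
        - (if i = q then γ * b else 0) + (if i = z then γ else 0) with hw'_def
      have hw'p : w' p = w p - γ * a := by simp [hw'_def, hpq, hpz]
      have hw'q : w' q = w q - γ * b := by simp [hw'_def, hpq.symm, hqz]
      have hw'z : w' z = w z + γ := by simp [hw'_def, hpz.symm, hqz.symm]
      have hw'other : ∀ i, i ≠ p → i ≠ q → i ≠ z → w' i = w i := by
        intro i h1 h2 h3; simp [hw'_def, h1, h2, h3]
      have hsum' : (∑ i ∈ u, w' i) = 1 := by
        simp only [hw'_def]
        rw [Finset.sum_add_distrib, Finset.sum_sub_distrib, Finset.sum_sub_distrib,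
          Finset.sum_ite_eq' u p, Finset.sum_ite_eq' u q, Finset.sum_ite_eq' u z,
          if_pos hpu, if_pos hqu, if_pos hzu, hw1]
        linear_combination (-γ : ℝ) * hab
      have hsumf' : (∑ i ∈ u, w' i * f i) ≤ c := by
        have : (∑ i ∈ u, w' i * f i) = ∑ i ∈ u, w i * f i := by
          simp only [hw'_def, sub_mul, add_mul, ite_mul, zero_mul]
          rw [Finset.sum_add_distrib, Finset.sum_sub_distrib, Finset.sum_sub_distrib,
            Finset.sum_ite_eq' u p, Finset.sum_ite_eq' u q, Finset.sum_ite_eq' u z,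
            if_pos hpu, if_pos hqu, if_pos hzu, hfz]
          linear_combination (-γ : ℝ) * habf
        linarith [this ▸ hwf]
      have hsmul' : (∑ i ∈ u, w' i • i) = ∑ i ∈ u, w i • i := by
        simp only [hw'_def, sub_smul, add_smul, ite_smul, zero_smul]
        rw [Finset.sum_add_distrib, Finset.sum_sub_distrib, Finset.sum_sub_distrib,
          Finset.sum_ite_eq' u p, Finset.sum_ite_eq' u q, Finset.sum_ite_eq' u z,
          if_pos hpu, if_pos hqu, if_pos hzu, hzdef, smul_add, smul_smul, smul_smul]
        abel
      have hw0' : ∀ i ∈ u, 0 ≤ w' i := by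
        intro i hi
        by_cases h1 : i = p
        · rw [h1, hw'p]; linarith
        by_cases h2 : i = q
        · rw [h2, hw'q]; linarith
        by_cases h3 : i = z
        · rw [h3, hw'z]; linarith [hw0 z hzu]
        · rw [hw'other i h1 h2 h3]; exact hw0 i hi
      have hwimp : ∀ i, w' i ≠ 0 → f i ≠ c → w i ≠ 0 := by
        intro i hi hfi
        by_cases h3 : i = z
        · exact absurd (h3 ▸ hfz) hfi
        by_cases h1 : i = p
        · intro hwi
          rw [h1] at hwi
          have h0 : γ = 0 := le_antisymm (by
            have h : γ ≤ w p / a := min_le_left _ _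
            rw [hwi, zero_div] at h; exact h) hγ0
          exact hi (by rw [h1, hw'p, hwi, h0]; ring)
        by_cases h2 : i = q
        · intro hwi
          rw [h2] at hwi
          have h0 : γ = 0 := le_antisymm (by
            have h : γ ≤ w q / b := min_le_right _ _
            rw [hwi, zero_div] at h; exact h) hγ0
          exact hi (by rw [h2, hw'q, hwi, h0]; ring)
        · rw [hw'other i h1 h2 h3] at hi; exact hi
      have hfilter_sub : u.filter (fun i => w' i ≠ 0 ∧ f i ≠ c)
          ⊆ u.filter (fun i => w i ≠ 0 ∧ f i ≠ c) := by
        intro i hi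
        obtain ⟨hiu, hi0, hific⟩ := Finset.mem_filter.1 hi
        exact Finset.mem_filter.2 ⟨hiu, hwimp i hi0 hific, hific⟩
      have hcard' : (u.filter (fun i => w' i ≠ 0 ∧ f i ≠ c)).card ≤ N := by
        have hss : u.filter (fun i => w' i ≠ 0 ∧ f i ≠ c)
            ⊂ u.filter (fun i => w i ≠ 0 ∧ f i ≠ c) := by
          refine Finset.ssubset_iff_of_subset hfilter_sub |>.2 ?_
          rcases le_total (w p / a) (w q / b) with hmin | hmin
          · refine ⟨p, Finset.mem_filter.2 ⟨hpu, hp0, ne_of_lt hpc⟩, ?_⟩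
            intro hcon
            have : w' p = 0 := by
              rw [hw'p, hγ_def, min_eq_left hmin, div_mul_cancel₀ _ (ne_of_gt ha)]; ring
            exact (Finset.mem_filter.1 hcon).2.1 this
          · refine ⟨q, Finset.mem_filter.2 ⟨hqu, hq0, ne_of_gt hqc⟩, ?_⟩
            intro hcon
            have : w' q = 0 := by
              rw [hw'q, hγ_def, min_eq_right hmin, div_mul_cancel₀ _ (ne_of_gt hb)]; ring
            exact (Finset.mem_filter.1 hcon).2.1 this
        have := Finset.card_lt_card hss
        omega
      rw [← hsmul']
      exact ih w' hw0' hsum' hsumf' hcard'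
  refine ⟨t, Set.Subset.antisymm ?_ ?_⟩
  · rintro x ⟨hxs, hxc⟩
    rw [Finset.convexHull_eq] at hxs
    obtain ⟨w, hw0, hw1, hwx⟩ := hxs
    set W : E → ℝ := fun i => if i ∈ s then w i else 0 with hW_def
    have hus : u ∩ s = s := Finset.inter_eq_right.2 hsu
    have hW1 : (∑ i ∈ u, W i) = 1 := by
      rw [hW_def]
      simp only [Finset.sum_ite_mem, hus, hw1]
    have hWx : (∑ i ∈ u, W i • i) = x := by
      rw [← hwx, Finset.centerMass_eq_of_sum_1 _ _ hw1]
      simp only [hW_def, ite_smul, zero_smul, Finset.sum_ite_mem, hus, id]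
    have hWf : (∑ i ∈ u, W i * f i) ≤ c := by
      have : (∑ i ∈ u, W i * f i) = f x := by
        rw [← hWx, map_sum]
        congr 1; ext i; rw [map_smul, smul_eq_mul]
      rw [this]; exact hxc
    rw [← hWx]
    refine key u.card W (fun i _ => ?_) hW1 hWf (Finset.card_filter_le _ _)
    by_cases h : i ∈ s
    · simpa [hW_def, h] using hw0 i h
    · simp [hW_def, h]
  · refine convexHull_min ?_ ((convex_convexHull ℝ _).inter (convex_halfSpace_le f.isLinear c))
    intro x hx
    rcases Finset.mem_union.1 (Finset.mem_coe.1 hx) with h | h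
    · obtain ⟨hxs, hxc⟩ := Finset.mem_filter.1 h
      exact ⟨subset_convexHull ℝ _ (Finset.mem_coe.2 hxs), hxc⟩
    · obtain ⟨pq, hpq2, rfl⟩ := Finset.mem_image.1 h
      obtain ⟨hmem, h1, h2⟩ := Finset.mem_filter.1 hpq2
      obtain ⟨hp, hq⟩ := Finset.mem_product.1 hmem
      exact ⟨segment_subset_convexHull (Finset.mem_coe.2 hp) (Finset.mem_coe.2 hq)
        (crossPt_mem_segment f c h1 h2), le_of_eq (crossPt_map f c h1 h2)⟩

lemma IsPolytope.inter_halfspace {n : ℕ} {P : Set (Fin n → ℝ)} (h : IsPolytope P)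
    (f : (Fin n → ℝ) →ₗ[ℝ] ℝ) (c : ℝ) : IsPolytope (P ∩ {x | f x ≤ c}) := by
  obtain ⟨s, rfl⟩ := h
  obtain ⟨t, ht⟩ := exists_slice f c s
  exact ⟨t, ht⟩

lemma IsPolytope.inter_cube {n : ℕ} {P : Set (Fin n → ℝ)} (h : IsPolytope P) :
    IsPolytope (P ∩ {x : Fin n → ℝ | ∀ i, 0 ≤ x i ∧ x i ≤ 1}) := by
  classical
  have main : ∀ s : Finset (Fin n),
      IsPolytope (P ∩ {x : Fin n → ℝ | ∀ i ∈ s, 0 ≤ x i ∧ x i ≤ 1}) := by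
    intro s
    induction s using Finset.induction_on with
    | empty => simpa using h
    | @insert a s ha ih =>
      have heq : (P ∩ {x : Fin n → ℝ | ∀ i ∈ insert a s, 0 ≤ x i ∧ x i ≤ 1}) =
          ((P ∩ {x : Fin n → ℝ | ∀ i ∈ s, 0 ≤ x i ∧ x i ≤ 1})
            ∩ {x : Fin n → ℝ | (-(LinearMap.proj a : (Fin n → ℝ) →ₗ[ℝ] ℝ)) x ≤ 0})
            ∩ {x : Fin n → ℝ | (LinearMap.proj a : (Fin n → ℝ) →ₗ[ℝ] ℝ) x ≤ 1} := by
        ext x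
        simp only [Set.mem_inter_iff, Set.mem_setOf_eq, Finset.mem_insert,
          LinearMap.neg_apply, LinearMap.proj_apply, neg_nonpos]
        constructor
        · rintro ⟨hP, hall⟩
          exact ⟨⟨⟨hP, fun i hi => hall i (Or.inr hi)⟩, (hall a (Or.inl rfl)).1⟩,
            (hall a (Or.inl rfl)).2⟩
        · rintro ⟨⟨⟨hP, hall⟩, h1⟩, h2⟩
          refine ⟨hP, fun i hi => ?_⟩
          rcases hi with rfl | hi
          · exact ⟨h1, h2⟩
          · exact hall i hi
      rw [heq]
      exact (ih.inter_halfspace _ 0).inter_halfspace _ 1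
  have := main Finset.univ
  simpa using this

lemma IsPolytope.translate {n : ℕ} {P : Set (Fin n → ℝ)} (h : IsPolytope P) (g : Fin n → ℝ) :
    IsPolytope ((fun x => g + x) '' P) := by
  classical
  obtain ⟨s, rfl⟩ := h
  refine ⟨s.image (fun x => g + x), ?_⟩
  rw [Finset.coe_image]
  have : (fun x => g + x) = ⇑((AffineEquiv.constVAdd ℝ (Fin n → ℝ) g).toAffineMap) := by
    ext x; simp [AffineEquiv.constVAdd]; rfl
  rw [this, AffineMap.image_convexHull]

lemma isFinUnion_of_fintype {n : ℕ} {ι : Type} [Fintype ι] (P : ι → Set (Fin n → ℝ))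
    (h : ∀ i, IsPolytope (P i)) : IsFinUnionOfPolytopes (⋃ i, P i) := by
  refine ⟨Fintype.card ι, P ∘ (Fintype.equivFin ι).symm, fun i => h _, ?_⟩
  exact ((Fintype.equivFin ι).symm.surjective.iUnion_comp P).symm

/-- A subset S of the torus T = ℝⁿ/ℤⁿ is polyhedral if and only if the
intersection of its preimage π⁻¹(S) with the unit cube [0,1]ⁿ is a finite
union of polytopes in ℝⁿ. -/
theorem isPolyhedral_iff_preimage_inter_unitCube (n : ℕ) (hn : 0 < n)
    (S : Set (Torus n)) :
    IsPolyhedral S ↔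
      IsFinUnionOfPolytopes
        (torusPi n ⁻¹' S ∩ {x : Fin n → ℝ | ∀ i, 0 ≤ x i ∧ x i ≤ 1}) := by
  classical
  constructor
  · rintro ⟨A, ⟨k, P, hP, rfl⟩, rfl⟩
    choose s hs using hP
    set r : ℕ := (Finset.univ.biUnion s).sup (fun v => Finset.univ.sup (fun i => ⌈|v i|⌉₊))
      with hr_def
    have hbound : ∀ j, ∀ x ∈ convexHull ℝ ((s j : Set (Fin n → ℝ))), ∀ i, |x i| ≤ (r : ℝ) := by
      intro j x hx
      have hconv : Convex ℝ {x : Fin n → ℝ | ∀ i, |x i| ≤ (r : ℝ)} := by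
        intro x hx y hy a b ha hb hab i
        calc |(a • x + b • y) i| = |a * x i + b * y i| := rfl
        _ ≤ |a * x i| + |b * y i| := abs_add_le _ _
        _ = a * |x i| + b * |y i| := by
            rw [abs_mul, abs_mul, abs_of_nonneg ha, abs_of_nonneg hb]
        _ ≤ a * r + b * r := add_le_add
            (mul_le_mul_of_nonneg_left (hx i) ha) (mul_le_mul_of_nonneg_left (hy i) hb)
        _ = r := by rw [← add_mul, hab, one_mul]
      refine convexHull_min ?_ hconv hx
      intro v hv i
      have hv' : v ∈ Finset.univ.biUnion s :=
        Finset.mem_biUnion.2 ⟨j, Finset.mem_univ _, hv⟩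
      calc |v i| ≤ (⌈|v i|⌉₊ : ℝ) := Nat.le_ceil _
      _ ≤ (r : ℝ) := by
          have h1 : ⌈|v i|⌉₊ ≤ Finset.univ.sup (fun i => ⌈|v i|⌉₊) :=
            Finset.le_sup (f := fun i => ⌈|v i|⌉₊) (Finset.mem_univ i)
          have h2 : Finset.univ.sup (fun i => ⌈|v i|⌉₊) ≤ r :=
            Finset.le_sup (f := fun v => Finset.univ.sup (fun i => ⌈|v i|⌉₊)) hv'
          exact_mod_cast h1.trans h2
    set G : Finset (Fin n → ℝ) :=
      Fintype.piFinset (fun _ : Fin n => (Finset.Icc (-(r : ℤ) - 1) ((r : ℤ) + 1)).image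
        (Int.cast : ℤ → ℝ)) with hG_def
    have hGlat : ∀ g ∈ G, g ∈ intLattice n := by
      intro g hg i
      have := Fintype.mem_piFinset.1 hg i
      obtain ⟨m, _, hm⟩ := Finset.mem_image.1 this
      exact ⟨m, hm.symm⟩
    set Q : Fin k × {g // g ∈ G} → Set (Fin n → ℝ) := fun jg =>
      ((fun x => (jg.2 : Fin n → ℝ) + x) '' convexHull ℝ ((s jg.1 : Set (Fin n → ℝ)))) ∩
        {x : Fin n → ℝ | ∀ i, 0 ≤ x i ∧ x i ≤ 1} with hQ_def
    have hQpoly : ∀ jg, IsPolytope (Q jg) := fun jg =>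
      IsPolytope.inter_cube (IsPolytope.translate ⟨s jg.1, rfl⟩ _)
    have heq : torusPi n ⁻¹' (torusPi n '' ⋃ i, P i) ∩
        {x : Fin n → ℝ | ∀ i, 0 ≤ x i ∧ x i ≤ 1} = ⋃ jg, Q jg := by
      ext x
      simp only [Set.mem_inter_iff, Set.mem_preimage, Set.mem_iUnion]
      constructor
      · rintro ⟨hxS, hxC⟩
        obtain ⟨a, haU, hπ⟩ := hxS
        obtain ⟨j, haj⟩ := Set.mem_iUnion.1 haU
        rw [hs j] at haj
        obtain ⟨z, hzlat, hz⟩ := (QuotientAddGroup.mk'_eq_mk' (intLattice n)).1 hπ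
        have hzi : ∀ i, a i + z i = x i := fun i => congrFun hz i
        have hzG : z ∈ G := by
          rw [hG_def, Fintype.mem_piFinset]
          intro i
          obtain ⟨m, hm⟩ := hzlat i
          have habs : |(m : ℝ)| ≤ (r : ℝ) + 1 := by
            have h1 : |x i| ≤ 1 := abs_le.2 ⟨by linarith [(hxC i).1], (hxC i).2⟩
            have h2 : |a i| ≤ (r : ℝ) := hbound j a haj i
            have h3 : (m : ℝ) = x i - a i := by rw [← hm]; linarith [hzi i]
            calc |(m:ℝ)| = |x i - a i| := by rw [h3]
            _ ≤ |x i| + |a i| := abs_sub _ _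
            _ ≤ (r : ℝ) + 1 := by linarith
          refine Finset.mem_image.2 ⟨m, Finset.mem_Icc.2 ⟨?_, ?_⟩, hm.symm⟩
          · have h4 := neg_le_of_abs_le habs
            have h5 : ((-(r:ℤ) - 1 : ℤ) : ℝ) ≤ (m : ℝ) := by push_cast; linarith
            exact_mod_cast h5
          · have := le_of_abs_le habs
            exact_mod_cast this
        refine ⟨(j, ⟨z, hzG⟩), ⟨a, haj, ?_⟩, hxC⟩
        rw [← hz]; exact add_comm z a
      · rintro ⟨⟨j, g⟩, ⟨a, haj, hax⟩, hxC⟩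
        refine ⟨⟨a, Set.mem_iUnion.2 ⟨j, (hs j) ▸ haj⟩, ?_⟩, hxC⟩
        refine (QuotientAddGroup.mk'_eq_mk' (intLattice n)).2 ⟨(g : Fin n → ℝ), hGlat _ g.2, ?_⟩
        rw [← hax]; exact add_comm a g
    rw [heq]
    exact isFinUnion_of_fintype Q hQpoly
  · intro hA
    refine ⟨_, hA, ?_⟩
    ext y
    constructor
    · intro hy
      obtain ⟨v, rfl⟩ := QuotientAddGroup.mk'_surjective (intLattice n) y
      refine ⟨fun i => Int.fract (v i), ⟨?_, fun i => ⟨Int.fract_nonneg _, (Int.fract_lt_one _).le⟩⟩, ?_⟩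
      · show torusPi n _ ∈ S
        have : torusPi n (fun i => Int.fract (v i)) = QuotientAddGroup.mk' (intLattice n) v := by
          refine (QuotientAddGroup.mk'_eq_mk' (intLattice n)).2 ⟨fun i => (⌊v i⌋ : ℝ), fun i => ⟨⌊v i⌋, rfl⟩, ?_⟩
          funext i
          exact Int.fract_add_floor (v i)
        rw [this]; exact hy
      · show torusPi n _ = _
        refine (QuotientAddGroup.mk'_eq_mk' (intLattice n)).2 ⟨fun i => (⌊v i⌋ : ℝ), fun i => ⟨⌊v i⌋, rfl⟩, ?_⟩
        funext i
        exact Int.fract_add_floor (v i)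
    · rintro ⟨v, ⟨hv, -⟩, rfl⟩
      exact hv
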